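/- If the penalty function h : ℝ^p → [0,+∞] is convex, then the function F is 1-strongly concave, i.e., the function t ↦ F(t) + t²/2 is concave on [0,∞). -/

import Mathlib

open scoped ENNReal

/-- Euclidean norm of a vector in `ℝ^k`. -/
noncomputable def l2norm {k : ℕ} (v : Fin k → ℝ) : ℝ := Real.sqrt (∑ i, (v i) ^ 2)

/-- Euclidean inner product on `ℝ^k`. -/
noncomputable def dotp {k : ℕ} (u v : Fin k → ℝ) : ℝ := ∑ i, u i * v i

/-- The function `F(t) = sup_{β : ‖X(β-β*)‖ ≤ t} (εᵀX(β-β*) - h(β)) - t²/2`,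
with values in `EReal` (the sup over the empty set is `⊥ = -∞`). -/
noncomputable def Fval {n p : ℕ} (X : Matrix (Fin n) (Fin p) ℝ) (bs : Fin p → ℝ)
    (h : (Fin p → ℝ) → ℝ≥0∞) (e : Fin n → ℝ) (t : ℝ) : EReal :=
  sSup {x : EReal | ∃ b : Fin p → ℝ, l2norm (X.mulVec (b - bs)) ≤ t ∧
      x = (dotp e (X.mulVec (b - bs)) : EReal) - (h b : EReal)} - ((t ^ 2 / 2 : ℝ) : EReal)

/-! ### Auxiliary lemmas -/

lemma l2norm_eq_norm {k : ℕ} (v : Fin k → ℝ) :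
    l2norm v = ‖(WithLp.equiv 2 (Fin k → ℝ)).symm v‖ := by
  rw [EuclideanSpace.norm_eq, l2norm]
  congr 1
  refine Finset.sum_congr rfl fun i _ => ?_
  simp [Real.norm_eq_abs, sq_abs]

lemma l2norm_comb {k : ℕ} (v w : Fin k → ℝ) {a c : ℝ} (ha : 0 ≤ a) (hc : 0 ≤ c) :
    l2norm (a • v + c • w) ≤ a * l2norm v + c * l2norm w := by
  rw [l2norm_eq_norm, l2norm_eq_norm, l2norm_eq_norm]
  have : (WithLp.equiv 2 (Fin k → ℝ)).symm (a • v + c • w)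
      = a • (WithLp.equiv 2 (Fin k → ℝ)).symm v + c • (WithLp.equiv 2 (Fin k → ℝ)).symm w := by
    simp
  rw [this]
  calc ‖a • (WithLp.equiv 2 (Fin k → ℝ)).symm v + c • (WithLp.equiv 2 (Fin k → ℝ)).symm w‖
      ≤ ‖a • (WithLp.equiv 2 (Fin k → ℝ)).symm v‖ + ‖c • (WithLp.equiv 2 (Fin k → ℝ)).symm w‖ :=
        norm_add_le _ _
    _ = a * ‖(WithLp.equiv 2 (Fin k → ℝ)).symm v‖ + c * ‖(WithLp.equiv 2 (Fin k → ℝ)).symm w‖ := by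
        rw [norm_smul, norm_smul, Real.norm_eq_abs, abs_of_nonneg ha, Real.norm_eq_abs,
          abs_of_nonneg hc]

lemma l2norm_zero {k : ℕ} : l2norm (0 : Fin k → ℝ) = 0 := by
  simp [l2norm]

lemma dotp_comb {k : ℕ} (e v w : Fin k → ℝ) (a c : ℝ) :
    dotp e (a • v + c • w) = a * dotp e v + c * dotp e w := by
  simp only [dotp, Pi.add_apply, Pi.smul_apply, smul_eq_mul, Finset.mul_sum,
    ← Finset.sum_add_distrib]
  refine Finset.sum_congr rfl fun i _ => ?_
  ring

/-- If `d + c*y ≤ C` for all `y ∈ T`, `c > 0`, and `T` contains a non-`⊥` element, then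
`d + c * sSup T ≤ C`. -/
lemma ereal_add_mul_sSup_le {c : ℝ} (hc : 0 < c) {T : Set EReal} {y₀ : EReal}
    (hy₀ : y₀ ∈ T) (hy₀' : y₀ ≠ ⊥) {d C : EReal}
    (H : ∀ y ∈ T, d + (c : EReal) * y ≤ C) : d + (c : EReal) * sSup T ≤ C := by
  induction d with
  | bot => simp [EReal.bot_add]
  | top =>
    have hne : (c : EReal) * y₀ ≠ ⊥ := by
      induction y₀ with
      | bot => exact absurd rfl hy₀'
      | top => rw [EReal.coe_mul_top_of_pos hc]; simp
      | coe y => simp [← EReal.coe_mul]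
    have h1 : (⊤ : EReal) + (c : EReal) * y₀ = ⊤ := EReal.top_add_of_ne_bot hne
    have := H y₀ hy₀
    rw [h1] at this
    rw [top_le_iff.1 this]
    exact le_top
  | coe d =>
    have hcne : (c : EReal) ≠ ⊤ := EReal.coe_ne_top c
    have hcpos : (0 : EReal) < (c : EReal) := EReal.coe_pos.2 hc
    have key : sSup T ≤ (C - (d : EReal)) / (c : EReal) := by
      apply sSup_le
      intro y hy
      rw [EReal.le_div_iff_mul_le hcpos hcne, mul_comm]
      have h0 := H y hy
      rw [add_comm] at h0
      exact (EReal.le_sub_iff_add_le (Or.inl (EReal.coe_ne_bot d))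
        (Or.inl (EReal.coe_ne_top d))).2 h0
    rw [EReal.le_div_iff_mul_le hcpos hcne, mul_comm] at key
    rw [add_comm]
    exact (EReal.le_sub_iff_add_le (Or.inl (EReal.coe_ne_bot d))
      (Or.inl (EReal.coe_ne_top d))).1 key

/-- Key combination lemma for suprema in `EReal`. -/
lemma ereal_comb_sSup_le {a c : ℝ} (ha : 0 < a) (hc : 0 < c) {S T : Set EReal}
    (hS : S.Nonempty) (hT : T.Nonempty) {C : EReal}
    (H : ∀ x ∈ S, ∀ y ∈ T, (a : EReal) * x + (c : EReal) * y ≤ C) :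
    (a : EReal) * sSup S + (c : EReal) * sSup T ≤ C := by
  by_cases hSb : sSup S = ⊥
  · rw [hSb, EReal.coe_mul_bot_of_pos ha, EReal.bot_add]
    exact bot_le
  by_cases hTb : sSup T = ⊥
  · rw [hTb, EReal.coe_mul_bot_of_pos hc, EReal.add_bot]
    exact bot_le
  -- obtain non-bot elements
  have hSex : ∃ x ∈ S, x ≠ ⊥ := by
    by_contra hcon
    push_neg at hcon
    exact hSb (le_bot_iff.1 (sSup_le fun x hx => le_bot_iff.2 (hcon x hx)))
  have hTex : ∃ y ∈ T, y ≠ ⊥ := by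
    by_contra hcon
    push_neg at hcon
    exact hTb (le_bot_iff.1 (sSup_le fun y hy => le_bot_iff.2 (hcon y hy)))
  obtain ⟨x₀, hx₀, hx₀'⟩ := hSex
  obtain ⟨y₀, hy₀, hy₀'⟩ := hTex
  -- first take sup over T for each x, then over S
  have step1 : ∀ x ∈ S, (a : EReal) * x + (c : EReal) * sSup T ≤ C := fun x hx =>
    ereal_add_mul_sSup_le hc hy₀ hy₀' (fun y hy => H x hx y hy)
  have step2 : ∀ x ∈ S, (c : EReal) * sSup T + (a : EReal) * x ≤ C := fun x hx => by
    rw [add_comm]; exact step1 x hx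
  rw [add_comm]
  exact ereal_add_mul_sSup_le ha hx₀ hx₀' step2

lemma ennreal_coe_ereal_toReal {x : ℝ≥0∞} (hx : x ≠ ⊤) :
    ((x.toReal : ℝ) : EReal) = (x : EReal) := by
  rw [← EReal.toReal_coe_ennreal]
  exact EReal.coe_toReal (by simpa [EReal.coe_ennreal_eq_top_iff] using hx)
    (by simp)

/-- The elementwise combination inequality in `EReal`. -/
lemma ereal_elt_comb {a c d₁ d₂ : ℝ} (ha : 0 < a) (hc : 0 < c)
    {h₁ h₂ h₃ : ℝ≥0∞} (hh : h₃ ≤ ENNReal.ofReal a * h₁ + ENNReal.ofReal c * h₂) :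
    (a : EReal) * ((d₁ : EReal) - (h₁ : EReal)) + (c : EReal) * ((d₂ : EReal) - (h₂ : EReal)) ≤
      ((a * d₁ + c * d₂ : ℝ) : EReal) - (h₃ : EReal) := by
  by_cases h1t : h₁ = ⊤
  · rw [h1t, EReal.coe_ennreal_top]
    rw [EReal.sub_top _]
    rw [EReal.coe_mul_bot_of_pos ha, EReal.bot_add]
    exact bot_le
  by_cases h2t : h₂ = ⊤
  · rw [h2t, EReal.coe_ennreal_top]
    rw [EReal.sub_top _]
    rw [EReal.coe_mul_bot_of_pos hc, EReal.add_bot]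
    exact bot_le
  have h3t : h₃ ≠ ⊤ := by
    intro h3
    rw [h3, top_le_iff] at hh
    have : ENNReal.ofReal a * h₁ + ENNReal.ofReal c * h₂ ≠ ⊤ := by
      apply ENNReal.add_ne_top.2
      constructor
      · exact ENNReal.mul_ne_top (by simp) h1t
      · exact ENNReal.mul_ne_top (by simp) h2t
    exact this hh
  set r₁ := h₁.toReal with hr₁
  set r₂ := h₂.toReal with hr₂
  set r₃ := h₃.toReal with hr₃
  have hrle : r₃ ≤ a * r₁ + c * r₂ := by
    have := ENNReal.toReal_mono (by
      apply ENNReal.add_ne_top.2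
      exact ⟨ENNReal.mul_ne_top (by simp) h1t, ENNReal.mul_ne_top (by simp) h2t⟩) hh
    rwa [ENNReal.toReal_add (ENNReal.mul_ne_top (by simp) h1t)
      (ENNReal.mul_ne_top (by simp) h2t), ENNReal.toReal_mul, ENNReal.toReal_mul,
      ENNReal.toReal_ofReal ha.le, ENNReal.toReal_ofReal hc.le] at this
  rw [← ennreal_coe_ereal_toReal h1t, ← ennreal_coe_ereal_toReal h2t,
    ← ennreal_coe_ereal_toReal h3t, ← hr₁, ← hr₂, ← hr₃,
    ← EReal.coe_sub, ← EReal.coe_sub, ← EReal.coe_sub, ← EReal.coe_mul, ← EReal.coe_mul,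
    ← EReal.coe_add, EReal.coe_le_coe_iff]
  nlinarith [hrle]

/-- if the penalty `h : ℝ^p → [0,∞]` is convex, then `F` is `1`-strongly
concave on `[0,∞)`, i.e. the function `t ↦ F(t) + t²/2` is concave on `[0,∞)`. -/
theorem F_one_strongly_concave {n p : ℕ} (X : Matrix (Fin n) (Fin p) ℝ)
    (bs : Fin p → ℝ) (ε : Fin n → ℝ) (h : (Fin p → ℝ) → ℝ≥0∞)
    (hconv : ∀ b₁ b₂ : Fin p → ℝ, ∀ a : ℝ, 0 ≤ a → a ≤ 1 →
      h (a • b₁ + (1 - a) • b₂) ≤ ENNReal.ofReal a * h b₁ + ENNReal.ofReal (1 - a) * h b₂) :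
    ∀ s t : ℝ, 0 ≤ s → 0 ≤ t → ∀ a : ℝ, 0 ≤ a → a ≤ 1 →
      (a : EReal) * (Fval X bs h ε s + ((s ^ 2 / 2 : ℝ) : EReal)) +
        ((1 - a : ℝ) : EReal) * (Fval X bs h ε t + ((t ^ 2 / 2 : ℝ) : EReal)) ≤
      Fval X bs h ε (a * s + (1 - a) * t) +
        (((a * s + (1 - a) * t) ^ 2 / 2 : ℝ) : EReal) := by
  intro s t hs ht a ha0 ha1
  -- the sup sets
  set Sset : ℝ → Set EReal := fun u =>
    {x : EReal | ∃ b : Fin p → ℝ, l2norm (X.mulVec (b - bs)) ≤ u ∧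
      x = (dotp ε (X.mulVec (b - bs)) : EReal) - (h b : EReal)} with hSset
  have hFval : ∀ u : ℝ, Fval X bs h ε u + ((u ^ 2 / 2 : ℝ) : EReal) = sSup (Sset u) := by
    intro u
    rw [Fval, EReal.sub_add_cancel]
  rw [hFval, hFval, hFval]
  have hnonempty : ∀ u : ℝ, 0 ≤ u → (Sset u).Nonempty := by
    intro u hu
    refine ⟨(dotp ε (X.mulVec (bs - bs)) : EReal) - ((h bs : ℝ≥0∞) : EReal), bs, ?_, rfl⟩
    simp [l2norm_zero, hu]
  -- main inequality on sets
  have hmono : ∀ u₁ u₂ : ℝ, u₁ ≤ u₂ → Sset u₁ ⊆ Sset u₂ := by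
    intro u₁ u₂ hu x hx
    obtain ⟨b, hb, rfl⟩ := hx
    exact ⟨b, hb.trans hu, rfl⟩
  rcases eq_or_lt_of_le ha0 with rfl | ha0'
  · simp only [sub_zero, EReal.coe_zero, zero_mul, EReal.coe_one, one_mul, zero_add,
      zero_mul, zero_add]
    norm_num
  rcases eq_or_lt_of_le ha1 with rfl | ha1'
  · simp only [sub_self, EReal.coe_zero, zero_mul, EReal.coe_one, one_mul, add_zero,
      zero_mul, add_zero]
    norm_num
  -- now 0 < a < 1
  have hca : 0 < 1 - a := by linarith
  apply ereal_comb_sSup_le ha0' hca (hnonempty s hs) (hnonempty t ht)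
  intro x hx y hy
  obtain ⟨b₁, hb₁, rfl⟩ := hx
  obtain ⟨b₂, hb₂, rfl⟩ := hy
  set b := a • b₁ + (1 - a) • b₂ with hb
  have hvec : X.mulVec (b - bs) = a • X.mulVec (b₁ - bs) + (1 - a) • X.mulVec (b₂ - bs) := by
    have : b - bs = a • (b₁ - bs) + (1 - a) • (b₂ - bs) := by
      rw [hb]
      funext i
      simp [Pi.sub_apply, Pi.add_apply, Pi.smul_apply, smul_eq_mul]
      ring
    rw [this, Matrix.mulVec_add, Matrix.mulVec_smul, Matrix.mulVec_smul]
  have hnorm : l2norm (X.mulVec (b - bs)) ≤ a * s + (1 - a) * t := by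
    rw [hvec]
    calc l2norm (a • X.mulVec (b₁ - bs) + (1 - a) • X.mulVec (b₂ - bs))
        ≤ a * l2norm (X.mulVec (b₁ - bs)) + (1 - a) * l2norm (X.mulVec (b₂ - bs)) :=
          l2norm_comb _ _ ha0 hca.le
      _ ≤ a * s + (1 - a) * t := by
          apply add_le_add
          · exact mul_le_mul_of_nonneg_left hb₁ ha0
          · exact mul_le_mul_of_nonneg_left hb₂ hca.le
  have hdot : dotp ε (X.mulVec (b - bs)) =
      a * dotp ε (X.mulVec (b₁ - bs)) + (1 - a) * dotp ε (X.mulVec (b₂ - bs)) := by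
    rw [hvec, dotp_comb]
  have hmem : (dotp ε (X.mulVec (b - bs)) : EReal) - ((h b : ℝ≥0∞) : EReal) ∈
      Sset (a * s + (1 - a) * t) := ⟨b, hnorm, rfl⟩
  refine le_trans ?_ (le_sSup hmem)
  rw [hdot]
  exact ereal_elt_comb ha0' hca (hconv b₁ b₂ a ha0 ha1)
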